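/- Let x = x₂ b₂ a^{k₂} x₃ b₁ a^{k₁} be a string of length m, where x₂, x₃ ∈ Σ*, a, b₁, b₂ ∈ Σ with b₁ ≠ a and b₂ ≠ a, and k₁, k₂ ≥ 1 are integers with k₂ < k₁. Let ℓ₂ = |x₂ b₂| and r₂ = |x₂ b₂ a^{k₂}| - 1. Then for every position i with ℓ₂ ≤ i ≤ r₂, good-suff[m-1-suff[i]] < m-1-i. -/

import Mathlib

/-- `suffT x i` is the length of the longest common suffix of `x` and `x[0..i]`,
i.e. the largest `k` with `0 ≤ k ≤ i+1` such that `x[i-k+1..i] = x[m-k..m-1]`. -/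
def suffT {α : Type*} [DecidableEq α] (x : List α) (i : ℕ) : ℕ :=
  Nat.findGreatest
    (fun k => (x.take (i + 1)).drop (i + 1 - k) = x.drop (x.length - k)) (i + 1)

/-- `Cond-suf(i,d)`: either `0 < d ≤ i+1` and `x[i-d+1..m-d-1]` is a suffix of `x`,
or `i+1 < d` and `x[0..m-d-1]` is a suffix of `x`. -/
def CondSuf {α : Type*} (x : List α) (i d : ℕ) : Prop :=
  (0 < d ∧ d ≤ i + 1 ∧ (x.drop (i + 1 - d)).take (x.length - 1 - i) <:+ x) ∨
  (i + 1 < d ∧ x.take (x.length - d) <:+ x)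

/-- `Cond-occ(i,d)`: either `0 < d ≤ i` and `x[i-d] ≠ x[i]`, or `i < d`. -/
def CondOcc {α : Type*} (x : List α) (i d : ℕ) : Prop :=
  (0 < d ∧ d ≤ i ∧ x[i - d]? ≠ x[i]?) ∨ i < d

/-- `goodSuff x i = min { d | Cond-suf(i,d) and Cond-occ(i,d) }`. -/
noncomputable def goodSuff {α : Type*} (x : List α) (i : ℕ) : ℕ :=
  sInf {d | CondSuf x i d ∧ CondOcc x i d}

/-- Let `x = x₂ b₂ a^{k₂} x₃ b₁ a^{k₁}` with `b₁ ≠ a`, `b₂ ≠ a`,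
`k₁, k₂ ≥ 1`, `k₂ < k₁`. Let `ℓ₂ = |x₂ b₂|` and `r₂ = |x₂ b₂ a^{k₂}| - 1`.
Then for every position `i` with `ℓ₂ ≤ i ≤ r₂`,
`good-suff[m-1-suff[i]] < m-1-i`. -/
theorem statement4 {α : Type*} [DecidableEq α] (x₂ x₃ : List α) (a b₁ b₂ : α) (k₁ k₂ : ℕ)
    (hb₁ : b₁ ≠ a) (hb₂ : b₂ ≠ a) (hk₁ : 1 ≤ k₁) (hk₂ : 1 ≤ k₂) (hkk : k₂ < k₁)
    (x : List α)
    (hx : x = x₂ ++ [b₂] ++ List.replicate k₂ a ++ x₃ ++ [b₁] ++ List.replicate k₁ a)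
    (i : ℕ) (hℓ : x₂.length + 1 ≤ i) (hr : i ≤ x₂.length + 1 + k₂ - 1) :
    goodSuff x (x.length - 1 - suffT x i) < x.length - 1 - i := by
  obtain ⟨j, hij⟩ : ∃ j, i = x₂.length + j := ⟨i - x₂.length, by omega⟩
  have hj1 : 1 ≤ j := by omega
  have hj2 : j ≤ k₂ := by omega
  have hm : x.length = x₂.length + 1 + k₂ + x₃.length + 1 + k₁ := by
    subst hx; simp; try omega
  have hdrop : ∀ k ≤ k₁, x.drop (x.length - k) = List.replicate k a := by
    intro k hk
    obtain ⟨y, hy, hylen⟩ : ∃ y : List α, x = y ++ List.replicate k₁ a ∧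
        y.length = x.length - k₁ :=
      ⟨x₂ ++ [b₂] ++ List.replicate k₂ a ++ x₃ ++ [b₁],
        by rw [hx], by simp [hm]; omega⟩
    have h1 : x.length - k = y.length + (k₁ - k) := by omega
    rw [h1, hy, List.drop_length_add_append, List.drop_replicate]
    congr 1; omega
  have htake : x.take (i + 1) = (x₂ ++ [b₂]) ++ List.replicate j a := by
    have hsplit : x = (x₂ ++ [b₂]) ++ (List.replicate k₂ a ++ (x₃ ++ [b₁] ++ List.replicate k₁ a)) := by
      rw [hx]; simp [List.append_assoc]
    have h1 : i + 1 = (x₂ ++ [b₂]).length + j := by simp; omega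
    rw [hsplit, h1, List.take_length_add_append, List.take_append_of_le_length (by simp; omega),
      List.take_replicate]
    congr 2; omega
  have hlb : (x₂ ++ [b₂]).length = x₂.length + 1 := by simp
  have hsuff : suffT x i = j := by
    unfold suffT
    rw [Nat.findGreatest_eq_iff]
    refine ⟨by omega, fun _ => ?_, fun n hn1 hn2 hP => ?_⟩
    · show (x.take (i + 1)).drop (i + 1 - j) = x.drop (x.length - j)
      rw [htake, hdrop j (by omega)]
      have h2 : i + 1 - j = (x₂ ++ [b₂]).length := by rw [hlb]; omega
      rw [h2, List.drop_left]
    · replace hP : ((x.take (i + 1)).drop (i + 1 - n)).drop (n - j - 1)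
          = (x.drop (x.length - n)).drop (n - j - 1) := by
        rw [hP]
      have him : i + 1 ≤ x.length := by omega
      rw [List.drop_drop, List.drop_drop] at hP
      have e1 : i + 1 - n + (n - j - 1) = x₂.length := by omega
      have e2 : x.length - n + (n - j - 1) = x.length - (j + 1) := by omega
      rw [e1, e2, htake, hdrop (j + 1) (by omega)] at hP
      have e4 : (x₂ ++ [b₂]) ++ List.replicate j a = x₂ ++ ([b₂] ++ List.replicate j a) := by
        simp [List.append_assoc]
      rw [e4, List.drop_left, List.replicate_succ] at hP
      simp at hP
      exact hb₂ hP
  rw [hsuff]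
  have hain : x[x.length - 1 - j]? = some a := by
    have h1 : x.length - 1 - j = x.length - (j + 1) + 0 := by omega
    rw [h1, ← List.getElem?_drop, hdrop (j + 1) (by omega)]
    simp
  have hbin : x[x.length - 1 - k₁]? = some b₁ := by
    obtain ⟨z, hz, hzlen⟩ : ∃ z : List α, x = z ++ ([b₁] ++ List.replicate k₁ a) ∧
        z.length = x.length - 1 - k₁ :=
      ⟨x₂ ++ [b₂] ++ List.replicate k₂ a ++ x₃,
        by rw [hx]; simp [List.append_assoc], by simp [hm]; omega⟩
    have h1 : x[x.length - 1 - k₁]? = (z ++ ([b₁] ++ List.replicate k₁ a))[z.length]? := by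
      rw [hzlen, ← hz]
    rw [h1, List.getElem?_append_right le_rfl]
    simp
  have hmem : (k₁ - j) ∈ {d | CondSuf x (x.length - 1 - j) d ∧ CondOcc x (x.length - 1 - j) d} := by
    constructor
    · left
      refine ⟨by omega, by omega, ?_⟩
      have h1 : x.length - 1 - j + 1 - (k₁ - j) = x.length - k₁ := by omega
      have h2 : x.length - 1 - (x.length - 1 - j) = j := by omega
      rw [h1, h2, hdrop k₁ le_rfl, List.take_replicate]
      have h3 : min j k₁ = j := by omega
      rw [h3]
      have h4 := List.drop_suffix (x.length - j) x
      rw [hdrop j (by omega)] at h4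
      exact h4
    · left
      refine ⟨by omega, by omega, ?_⟩
      have h1 : x.length - 1 - j - (k₁ - j) = x.length - 1 - k₁ := by omega
      rw [h1, hbin, hain]
      simp [hb₁]
  calc goodSuff x (x.length - 1 - j) ≤ k₁ - j := Nat.sInf_le hmem
    _ < x.length - 1 - i := by omega
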